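/- Let 0 < c₀ ≤ 2, K₀ = √((2−c₀)/c₀), β(t) = (c₀K₀/2)(2πt+k). Then X(t) = 2 arccot(K₀ coth(β(t))) satisfies dX/dt = 2π cos X + 2π(c₀−1) for t with β(t) ≠ 0, and X(t) = 2 arccot(K₀ tanh(β(t))) satisfies the same ODE for all t. -/

import Mathlib

open Real

noncomputable def arccot (y : ℝ) : ℝ := π / 2 - Real.arctan y

noncomputable def coth (y : ℝ) : ℝ := Real.cosh y / Real.sinh y

lemma aux_ode (c₀ K₀ : ℝ) (hc : c₀ * K₀ ^ 2 = 2 - c₀) (u X : ℝ → ℝ) (t : ℝ)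
    (hu : HasDerivAt u ((π * c₀ * K₀) * (1 - (u t) ^ 2)) t)
    (hX : ∀ s, X s = 2 * (π / 2 - Real.arctan (K₀ * u s))) :
    HasDerivAt X (2 * π * Real.cos (X t) + 2 * π * (c₀ - 1)) t := by
  have hXf : X = fun s => 2 * (π / 2 - Real.arctan (K₀ * u s)) := funext hX
  set y := K₀ * u t with hy
  have h1 : HasDerivAt (fun s => K₀ * u s) (K₀ * ((π * c₀ * K₀) * (1 - (u t) ^ 2))) t :=
    hu.const_mul _
  have h2 : HasDerivAt (fun s => Real.arctan (K₀ * u s))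
      ((1 / (1 + y ^ 2)) * (K₀ * ((π * c₀ * K₀) * (1 - (u t) ^ 2)))) t :=
    by have := (Real.hasDerivAt_arctan (K₀ * u t)).comp t h1; exact this
  have h3 : HasDerivAt X
      (2 * (0 - (1 / (1 + y ^ 2)) * (K₀ * ((π * c₀ * K₀) * (1 - (u t) ^ 2))))) t := by
    rw [hXf]
    exact ((hasDerivAt_const t (π / 2)).sub h2).const_mul 2
  have hy2 : (0:ℝ) < 1 + y ^ 2 := by positivity
  have hcos : Real.cos (X t) = (y ^ 2 - 1) / (y ^ 2 + 1) := by
    have : X t = π - 2 * Real.arctan y := by rw [hX]; ring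
    rw [this, Real.cos_pi_sub, Real.cos_two_mul, Real.cos_arctan]
    rw [div_pow, one_pow, Real.sq_sqrt hy2.le]
    field_simp
    ring
  have h4 : K₀ * ((π * c₀ * K₀) * (1 - (u t) ^ 2)) = π * ((2 - c₀) - c₀ * y ^ 2) := by
    rw [hy]; linear_combination π * hc
  rw [h4] at h3
  convert h3 using 1
  rw [hcos]
  field_simp
  ring

theorem X_solves_ode_c0_in_zero_two (c₀ k : ℝ) (hc₀ : 0 < c₀) (hc₀' : c₀ ≤ 2)
    (K₀ : ℝ) (hK₀ : K₀ = Real.sqrt ((2 - c₀) / c₀))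
    (β : ℝ → ℝ) (hβ : ∀ t, β t = (c₀ * K₀ / 2) * (2 * π * t + k))
    (X₁ X₂ : ℝ → ℝ)
    (hX₁ : ∀ t, X₁ t = 2 * arccot (K₀ * coth (β t)))
    (hX₂ : ∀ t, X₂ t = 2 * arccot (K₀ * Real.tanh (β t))) :
    (∀ t : ℝ, β t ≠ 0 →
      HasDerivAt X₁ (2 * π * Real.cos (X₁ t) + 2 * π * (c₀ - 1)) t) ∧
    (∀ t : ℝ,
      HasDerivAt X₂ (2 * π * Real.cos (X₂ t) + 2 * π * (c₀ - 1)) t) := by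
  have hc : c₀ * K₀ ^ 2 = 2 - c₀ := by
    have h1 : (0:ℝ) ≤ (2 - c₀) / c₀ := div_nonneg (by linarith) hc₀.le
    rw [hK₀, Real.sq_sqrt h1]
    field_simp
  have hβd : ∀ t, HasDerivAt β (π * c₀ * K₀) t := by
    intro t
    have h0 : HasDerivAt (fun s : ℝ => 2 * π * s + k) (2 * π) t := by
      simpa using ((hasDerivAt_id t).const_mul (2 * π)).add_const k
    have h1 := h0.const_mul (c₀ * K₀ / 2)
    have heq : β = fun s : ℝ => (c₀ * K₀ / 2) * (2 * π * s + k) := funext hβ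
    rw [heq]
    exact h1.congr_deriv (by ring)
  constructor
  · intro t ht
    have hs : Real.sinh (β t) ≠ 0 := Real.sinh_ne_zero.mpr ht
    have hcoth : HasDerivAt (fun s => coth (β s))
        ((π * c₀ * K₀) * (1 - (coth (β t)) ^ 2)) t := by
      have hdiv : HasDerivAt (fun y => Real.cosh y / Real.sinh y)
          ((Real.sinh (β t) * Real.sinh (β t) - Real.cosh (β t) * Real.cosh (β t)) /
            (Real.sinh (β t)) ^ 2) (β t) :=
        (Real.hasDerivAt_cosh (β t)).div (Real.hasDerivAt_sinh (β t)) hs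
      have h5 : (Real.sinh (β t) * Real.sinh (β t) - Real.cosh (β t) * Real.cosh (β t)) /
          (Real.sinh (β t)) ^ 2 = 1 - (coth (β t)) ^ 2 := by
        unfold coth
        rw [div_pow]
        field_simp
      have := hdiv.comp t (hβd t)
      exact this.congr_deriv (by rw [h5]; ring)
    exact aux_ode c₀ K₀ hc _ X₁ t hcoth (fun s => by rw [hX₁ s]; rfl)
  · intro t
    have hcpos : (0:ℝ) < Real.cosh (β t) := Real.cosh_pos (β t)
    have htanh : HasDerivAt (fun s => Real.tanh (β s))
        ((π * c₀ * K₀) * (1 - (Real.tanh (β t)) ^ 2)) t := by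
      have hdiv : HasDerivAt (fun y => Real.sinh y / Real.cosh y)
          ((Real.cosh (β t) * Real.cosh (β t) - Real.sinh (β t) * Real.sinh (β t)) /
            (Real.cosh (β t)) ^ 2) (β t) :=
        (Real.hasDerivAt_sinh (β t)).div (Real.hasDerivAt_cosh (β t)) hcpos.ne'
      have hdiv' : HasDerivAt Real.tanh
          ((Real.cosh (β t) * Real.cosh (β t) - Real.sinh (β t) * Real.sinh (β t)) /
            (Real.cosh (β t)) ^ 2) (β t) := by
        have heq : Real.tanh = fun y => Real.sinh y / Real.cosh y :=
          funext Real.tanh_eq_sinh_div_cosh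
        rw [heq]; exact hdiv
      have h5 : (Real.cosh (β t) * Real.cosh (β t) - Real.sinh (β t) * Real.sinh (β t)) /
          (Real.cosh (β t)) ^ 2 = 1 - (Real.tanh (β t)) ^ 2 := by
        rw [Real.tanh_eq_sinh_div_cosh, div_pow]
        field_simp
      have := hdiv'.comp t (hβd t)
      exact this.congr_deriv (by rw [h5]; ring)
    exact aux_ode c₀ K₀ hc _ X₂ t htanh (fun s => by rw [hX₂ s]; rfl)
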